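/- In the CAR setting with vacuum, for each subset M ⊆ {1,2,3,4}, written as M = {a₁ < a₂ < ⋯ < a_i}, define η_M = (χ̄¹_{a₁}⋯χ̄¹_{a_i})(χ̄²_{a₁}⋯χ̄²_{a_i})⋯(χ̄ⁿ_{a₁}⋯χ̄ⁿ_{a_i}) η₀ (with η_∅ = η₀). Then: (a) the 16 vectors η_M, M ∈ 𝒫({1,2,3,4}), are mutually orthogonal unit vectors; (b) L_k η_M = 0 for all 1 ≤ k < n; (c) Σ_{a=1}^4 χ̄ᵏ_a χᵐ_a η_M = 0 for all 1 ≤ k < m ≤ n. In particular, the subspace F₀ = {η ∈ V : L_k η = 0 for all 1 ≤ k < n and Σ_{a=1}^4 χ̄ᵏ_a χᵐ_a η = 0 for all 1 ≤ k < m ≤ n} has complex dimension at least 16. -/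

import Mathlib

open List

section CAR

variable {V : Type*} [NormedAddCommGroup V] [InnerProductSpace ℂ V]
variable {ι : Type*} [LinearOrder ι]
variable (cbar : ι → (V →ₗ[ℂ] V))

/-- Product of creation operators along a list of modes. -/
noncomputable def AAop (t : List ι) : V →ₗ[ℂ] V := (t.map cbar).prod

variable {cbar} {c : ι → (V →ₗ[ℂ] V)}

lemma AAop_nil (v : V) : AAop cbar [] v = v := rfl

lemma AAop_cons (j : ι) (t : List ι) (v : V) :
    AAop cbar (j :: t) v = cbar j (AAop cbar t v) := by
  simp only [AAop, List.map_cons, List.prod_cons, Module.End.mul_apply]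

section lemmas

variable (hcs : ∀ i (x : V), c i (cbar i x) = x - cbar i (c i x))
variable (hcn : ∀ i j, i ≠ j → ∀ (x : V), c i (cbar j x) = - cbar j (c i x))
variable (hbb' : ∀ i j (x : V), cbar i (cbar j x) = - cbar j (cbar i x))

include hbb' in
lemma cbarAA_mem {i : ι} {t : List ι} (hi : i ∈ t) (v : V) :
    cbar i (AAop cbar t v) = 0 := by
  induction t with
  | nil => cases hi
  | cons j t ih =>
    rw [AAop_cons, hbb']
    rcases List.mem_cons.mp hi with h | h
    · subst h
      have h2 : cbar i (cbar i (AAop cbar t v)) = - cbar i (cbar i (AAop cbar t v)) := hbb' i i _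
      have h3 : (2:ℂ) • cbar i (cbar i (AAop cbar t v)) = 0 := by
        rw [two_smul]; nth_rewrite 1 [h2]; exact neg_add_cancel _
      have h4 := (smul_eq_zero.mp h3).resolve_left (by norm_num)
      rw [h4, neg_zero]
    · rw [ih h, map_zero, neg_zero]

include hcs hcn in
lemma cAA_not_mem {i : ι} {t : List ι} (hi : i ∉ t) {v : V} (hv : c i v = 0) :
    c i (AAop cbar t v) = 0 := by
  induction t with
  | nil => exact hv
  | cons j t ih =>
    rw [AAop_cons, hcn i j (fun h => hi (by rw [h]; exact List.mem_cons_self)),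
      ih (fun h => hi (List.mem_cons_of_mem _ h)), map_zero, neg_zero]

include hcs hcn in
lemma cAA_mem {i : ι} {t : List ι} (hi : i ∈ t) (ht : t.Nodup) {v : V} (hv : c i v = 0) :
    ∃ ε : ℂ, c i (AAop cbar t v) = ε • AAop cbar (t.erase i) v := by
  induction t with
  | nil => cases hi
  | cons j t ih =>
    by_cases h : i = j
    · subst h
      refine ⟨1, ?_⟩
      rw [AAop_cons, hcs, List.erase_cons_head, one_smul,
        cAA_not_mem hcs hcn (List.nodup_cons.mp ht).1 hv, map_zero, sub_zero]
    · have hit : i ∈ t := (List.mem_cons.mp hi).resolve_left h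
      obtain ⟨ε, hε⟩ := ih hit (List.nodup_cons.mp ht).2
      refine ⟨-ε, ?_⟩
      rw [AAop_cons, hcn i j h, hε, map_smul,
        List.erase_cons_tail (by simpa using Ne.symm h), AAop_cons, neg_smul]

include hcs hcn hbb' in
lemma cbar_c_same {i : ι} {t : List ι} (ht : t.Nodup) {v : V} (hv : c i v = 0) :
    cbar i (c i (AAop cbar t v)) = if i ∈ t then AAop cbar t v else 0 := by
  induction t with
  | nil => simp [AAop_nil, hv]
  | cons j t ih =>
    by_cases h : i = j
    · subst h
      have hit : i ∉ t := (List.nodup_cons.mp ht).1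
      rw [AAop_cons, hcs, cAA_not_mem hcs hcn hit hv, map_zero, sub_zero,
        if_pos List.mem_cons_self]
    · rw [AAop_cons, hcn i j h, map_neg, hbb', neg_neg,
        ih (List.nodup_cons.mp ht).2]
      by_cases hit : i ∈ t
      · rw [if_pos hit, if_pos (List.mem_cons_of_mem _ hit)]
      · rw [if_neg hit, map_zero, if_neg (by simp [h, hit])]

include hcs hcn hbb' in
lemma cbar_c_ne {i j : ι} {t : List ι} (hij : i ≠ j) (ht : t.Nodup)
    (hmem : i ∈ t ↔ j ∈ t) {v : V} (hv : c j v = 0) :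
    cbar i (c j (AAop cbar t v)) = 0 := by
  by_cases hjt : j ∈ t
  · obtain ⟨ε, hε⟩ := cAA_mem hcs hcn hjt ht hv
    rw [hε, map_smul, cbarAA_mem hbb' ((List.mem_erase_of_ne hij).mpr (hmem.mpr hjt)) v,
      smul_zero]
  · rw [cAA_not_mem hcs hcn hjt hv, map_zero]

variable (hadj : ∀ i (u v : V), (inner ℂ (cbar i u) v : ℂ) = inner ℂ u (c i v))
variable {η₀ : V} (hη : (inner ℂ η₀ η₀ : ℂ) = 1) (hvac : ∀ i, c i η₀ = 0)

include hadj in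
lemma hadj2 (i : ι) (u v : V) : (inner ℂ u (cbar i v) : ℂ) = inner ℂ (c i u) v := by
  rw [← inner_conj_symm, hadj, inner_conj_symm]

include hcs hcn hadj hη hvac in
lemma inner_AAop : ∀ s t : List ι, s.Pairwise (· < ·) → t.Pairwise (· < ·) →
    (inner ℂ (AAop cbar s η₀) (AAop cbar t η₀) : ℂ) = if s = t then 1 else 0 := by
  intro s
  induction s with
  | nil =>
    intro t _ _
    cases t with
    | nil => simpa [AAop_nil] using hη
    | cons j t => rw [AAop_nil, AAop_cons, hadj2 hadj, hvac, inner_zero_left,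
        if_neg (by simp)]
  | cons i s ih =>
    intro t hs ht
    have hs' : s.Pairwise (· < ·) := hs.of_cons
    have htn : t.Nodup := ht.imp (fun h => ne_of_lt h)
    rw [AAop_cons, hadj]
    by_cases hi : i ∈ t
    · by_cases heq : s = t.erase i
      · have hperm : t.Perm (i :: s) := heq ▸ List.perm_cons_erase hi
        have hteq : t = i :: s := List.Perm.eq_of_pairwise'
          (ht.imp (fun h => le_of_lt h)) (hs.imp (fun h => le_of_lt h)) hperm
        subst hteq
        have hins : i ∉ s := fun h => lt_irrefl i (List.rel_of_pairwise_cons hs (a' := i) h)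
        rw [AAop_cons, hcs, cAA_not_mem hcs hcn hins (hvac i), map_zero, sub_zero,
          ih s hs' hs', if_pos rfl, if_pos rfl]
      · obtain ⟨ε, hε⟩ := cAA_mem hcs hcn hi htn (hvac i)
        have hte : (t.erase i).Pairwise (· < ·) := List.Pairwise.sublist (List.erase_sublist (a := i) (l := t)) ht
        rw [hε, inner_smul_right, ih (t.erase i) hs' hte, if_neg heq, mul_zero,
          if_neg (fun h => heq (by rw [← h, List.erase_cons_head]))]
    · rw [cAA_not_mem hcs hcn hi (hvac i), inner_zero_right,
        if_neg (fun h => hi (by rw [← h]; exact List.mem_cons_self))]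

end lemmas
end CAR


/-- The ordered product of creation operators `χ̄ᵏ_{a₁}⋯χ̄ᵏ_{a_i}` over a subset
`M = {a₁ < ⋯ < a_i} ⊆ {1,2,3,4}` for fixed colour `k`. -/
noncomputable def chiBarProd {V : Type*} [AddCommGroup V] [Module ℂ V] {n : ℕ}
    (χbar : Fin n → Fin 4 → (V →ₗ[ℂ] V)) (k : Fin n) (M : Finset (Fin 4)) :
    V →ₗ[ℂ] V :=
  ((M.sort (· ≤ ·)).map (χbar k)).prod

/-- The vector `η_M = (χ̄¹_{a₁}⋯χ̄¹_{a_i})(χ̄²_{a₁}⋯χ̄²_{a_i})⋯(χ̄ⁿ_{a₁}⋯χ̄ⁿ_{a_i}) η₀`. -/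
noncomputable def etaM {V : Type*} [AddCommGroup V] [Module ℂ V] {n : ℕ}
    (χbar : Fin n → Fin 4 → (V →ₗ[ℂ] V)) (M : Finset (Fin 4)) (η₀ : V) : V :=
  (((List.finRange n).map fun k => chiBarProd χbar k M).prod) η₀

/-- The word of modes for `η_M`. -/
def wordM (n : ℕ) (M : Finset (Fin 4)) : List (Fin n ×ₗ Fin 4) :=
  (List.finRange n).flatMap fun k => (M.sort (· ≤ ·)).map fun a => toLex (k, a)

lemma wordM_sorted (n : ℕ) (M : Finset (Fin 4)) : (wordM n M).Pairwise (· < ·) := by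
  have key : ∀ l : List (Fin n), l.Pairwise (· < ·) →
      (l.flatMap fun k => (M.sort (· ≤ ·)).map fun a =>
        (toLex (k, a) : Fin n ×ₗ Fin 4)).Pairwise (· < ·) := by
    intro l hl
    induction l with
    | nil => exact List.Pairwise.nil
    | cons k l ih =>
      rw [List.flatMap_cons]
      apply List.pairwise_append.mpr
      refine ⟨?_, ih hl.of_cons, ?_⟩
      · exact List.Pairwise.map _ (fun a b hab => by
          rw [Prod.Lex.lt_iff]; exact Or.inr ⟨rfl, hab⟩) M.sortedLT_sort.pairwise
      · intro x hx y hy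
        obtain ⟨a, _, rfl⟩ := List.mem_map.mp hx
        obtain ⟨k', hk', hy'⟩ := List.mem_flatMap.mp hy
        obtain ⟨b, _, rfl⟩ := List.mem_map.mp hy'
        rw [Prod.Lex.lt_iff]
        exact Or.inl (List.rel_of_pairwise_cons hl (a' := k') hk')
  exact key _ (List.pairwise_lt_finRange n)

lemma wordM_nodup (n : ℕ) (M : Finset (Fin 4)) : (wordM n M).Nodup :=
  List.Pairwise.imp (fun h => ne_of_lt h) (wordM_sorted n M)

lemma wordM_mem (n : ℕ) (M : Finset (Fin 4)) (k : Fin n) (a : Fin 4) :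
    (toLex (k, a) : Fin n ×ₗ Fin 4) ∈ wordM n M ↔ a ∈ M := by
  simp only [wordM, List.mem_flatMap, List.mem_map, List.mem_finRange, true_and]
  constructor
  · rintro ⟨k', a', ha', heq⟩
    have h2 : (k', a') = (k, a) := heq
    rw [Prod.mk.injEq] at h2
    obtain ⟨rfl, rfl⟩ := h2
    exact (Finset.mem_sort _).mp ha'
  · intro ha
    exact ⟨k, a, (Finset.mem_sort _).mpr ha, rfl⟩

lemma etaM_eq_AAop {V : Type*} [NormedAddCommGroup V] [InnerProductSpace ℂ V] {n : ℕ}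
    (χbar : Fin n → Fin 4 → (V →ₗ[ℂ] V)) (M : Finset (Fin 4)) (η₀ : V) :
    (((List.finRange n).map fun k => chiBarProd χbar k M).prod) η₀
      = AAop (fun i : Fin n ×ₗ Fin 4 => χbar (ofLex i).1 (ofLex i).2) (wordM n M) η₀ := by
  have key : ∀ l : List (Fin n),
      ((l.flatMap fun k => (M.sort (· ≤ ·)).map fun a =>
          (toLex (k, a) : Fin n ×ₗ Fin 4)).map
        (fun i : Fin n ×ₗ Fin 4 => χbar (ofLex i).1 (ofLex i).2)).prod
        = (l.map fun k => chiBarProd χbar k M).prod := by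
    intro l
    induction l with
    | nil => rfl
    | cons k l ih =>
      rw [List.flatMap_cons, List.map_append, List.prod_append, ih,
        List.map_cons, List.prod_cons]
      congr 1
      rw [List.map_map]
      rfl
  rw [AAop, wordM, key]

/-- In the CAR setting with vacuum, the 16 vectors `η_M`,
`M ∈ 𝒫({1,2,3,4})`, are mutually orthogonal unit vectors annihilated by all the operators
`L_k` (`1 ≤ k < n`) and `Σ_a χ̄ᵏ_a χᵐ_a` (`1 ≤ k < m ≤ n`); in particular the joint kernel
`F₀` of these operators has complex dimension at least `16`. -/
theorem etaM_orthonormal_and_dim_F0 {V : Type*} [NormedAddCommGroup V]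
    [InnerProductSpace ℂ V]
    (n : ℕ) (hn : 2 ≤ n) (χ χbar : Fin n → Fin 4 → (V →ₗ[ℂ] V))
    (hadj : ∀ k a (u v : V), (inner ℂ (χbar k a u) v : ℂ) = inner ℂ u (χ k a v))
    (hCAR₁ : ∀ k m a b, χ k a ∘ₗ χbar m b + χbar m b ∘ₗ χ k a =
      if k = m ∧ a = b then LinearMap.id else 0)
    (hCAR₂ : ∀ k m a b, χ k a ∘ₗ χ m b + χ m b ∘ₗ χ k a = 0)
    (hCAR₃ : ∀ k m a b, χbar k a ∘ₗ χbar m b + χbar m b ∘ₗ χbar k a = 0)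
    (η₀ : V) (hη₀ : ‖η₀‖ = 1) (hvac : ∀ k a, χ k a η₀ = 0) :
    -- (a) mutually orthogonal unit vectors
    (∀ M : Finset (Fin 4), ‖etaM χbar M η₀‖ = 1) ∧
    (∀ M M' : Finset (Fin 4), M ≠ M' →
      (inner ℂ (etaM χbar M η₀) (etaM χbar M' η₀) : ℂ) = 0) ∧
    -- (b) `L_k η_M = 0` for `1 ≤ k < n`
    (∀ (M : Finset (Fin 4)) (k : Fin n), (k : ℕ) < n - 1 →
      ((∑ a, χbar k a ∘ₗ χ k a) -
       (∑ a, χbar ⟨n - 1, by omega⟩ a ∘ₗ χ ⟨n - 1, by omega⟩ a)) (etaM χbar M η₀) = 0) ∧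
    -- (c) `Σ_a χ̄ᵏ_a χᵐ_a η_M = 0` for `1 ≤ k < m ≤ n`
    (∀ (M : Finset (Fin 4)) (k m : Fin n), k < m →
      (∑ a, χbar k a ∘ₗ χ m a) (etaM χbar M η₀) = 0) ∧
    -- dimension of `F₀` is at least 16
    16 ≤ Module.rank ℂ
      ↥((⨅ k : Fin n, ⨅ _ : (k : ℕ) < n - 1,
          LinearMap.ker ((∑ a, χbar k a ∘ₗ χ k a) -
            (∑ a, χbar ⟨n - 1, by omega⟩ a ∘ₗ χ ⟨n - 1, by omega⟩ a))) ⊓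
        (⨅ k : Fin n, ⨅ m : Fin n, ⨅ _ : k < m,
          LinearMap.ker (∑ a, χbar k a ∘ₗ χ m a))) := by
  classical
  let c' : (Fin n ×ₗ Fin 4) → (V →ₗ[ℂ] V) := fun i => χ (ofLex i).1 (ofLex i).2
  let cbar' : (Fin n ×ₗ Fin 4) → (V →ₗ[ℂ] V) := fun i => χbar (ofLex i).1 (ofLex i).2
  have hiff : ∀ i j : Fin n ×ₗ Fin 4,
      i = j ↔ ((ofLex i).1 = (ofLex j).1 ∧ (ofLex i).2 = (ofLex j).2) := by
    intro i j
    constructor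
    · rintro rfl; exact ⟨rfl, rfl⟩
    · rintro ⟨h1, h2⟩
      exact Prod.ext_iff.mpr ⟨h1, h2⟩
  have hcs : ∀ i (x : V), c' i (cbar' i x) = x - cbar' i (c' i x) := by
    intro i x
    have h0 := congrArg (fun f : V →ₗ[ℂ] V => f x)
      (hCAR₁ (ofLex i).1 (ofLex i).1 (ofLex i).2 (ofLex i).2)
    rw [if_pos ⟨rfl, rfl⟩] at h0
    simp only [LinearMap.add_apply, LinearMap.comp_apply, LinearMap.id_apply] at h0
    exact eq_sub_of_add_eq h0
  have hcn : ∀ i j, i ≠ j → ∀ (x : V), c' i (cbar' j x) = - cbar' j (c' i x) := by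
    intro i j hij x
    have h0 := congrArg (fun f : V →ₗ[ℂ] V => f x)
      (hCAR₁ (ofLex i).1 (ofLex j).1 (ofLex i).2 (ofLex j).2)
    rw [if_neg (fun h => hij ((hiff i j).mpr h))] at h0
    simp only [LinearMap.add_apply, LinearMap.comp_apply, LinearMap.zero_apply] at h0
    exact eq_neg_of_add_eq_zero_left h0
  have hbb' : ∀ i j (x : V), cbar' i (cbar' j x) = - cbar' j (cbar' i x) := by
    intro i j x
    have h0 := congrArg (fun f : V →ₗ[ℂ] V => f x)
      (hCAR₃ (ofLex i).1 (ofLex j).1 (ofLex i).2 (ofLex j).2)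
    simp only [LinearMap.add_apply, LinearMap.comp_apply, LinearMap.zero_apply] at h0
    exact eq_neg_of_add_eq_zero_left h0
  have hadj' : ∀ i (u v : V), (inner ℂ (cbar' i u) v : ℂ) = inner ℂ u (c' i v) :=
    fun i u v => hadj _ _ u v
  have hη : (inner ℂ η₀ η₀ : ℂ) = 1 := by
    rw [inner_self_eq_norm_sq_to_K, hη₀]; norm_num
  have hvac' : ∀ i, c' i η₀ = 0 := fun i => hvac _ _
  have heta : ∀ M : Finset (Fin 4), etaM χbar M η₀ = AAop cbar' (wordM n M) η₀ :=
    fun M => etaM_eq_AAop χbar M η₀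
  -- (a) norms
  have ha1 : ∀ M : Finset (Fin 4), ‖etaM χbar M η₀‖ = 1 := by
    intro M
    have h1 := inner_AAop hcs hcn hadj' hη hvac' (wordM n M) (wordM n M)
      (wordM_sorted n M) (wordM_sorted n M)
    rw [if_pos rfl] at h1
    rw [heta M]
    have h3 : ‖AAop cbar' (wordM n M) η₀‖^2 = 1 := by
      have h2 := inner_self_eq_norm_sq_to_K (𝕜 := ℂ) (AAop cbar' (wordM n M) η₀)
      rw [h1] at h2
      exact_mod_cast show ((‖(AAop cbar' (wordM n M)) η₀‖ ^ 2 : ℝ) : ℂ) = 1 by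
        push_cast
        exact h2.symm
    nlinarith [norm_nonneg (AAop cbar' (wordM n M) η₀)]
  -- (a) orthogonality
  have hwinj : ∀ M M' : Finset (Fin 4), wordM n M = wordM n M' → M = M' := by
    intro M M' h
    ext a
    rw [← wordM_mem n M ⟨0, by omega⟩ a, ← wordM_mem n M' ⟨0, by omega⟩ a, h]
  have ha2 : ∀ M M' : Finset (Fin 4), M ≠ M' →
      (inner ℂ (etaM χbar M η₀) (etaM χbar M' η₀) : ℂ) = 0 := by
    intro M M' hMM'
    have h1 := inner_AAop hcs hcn hadj' hη hvac' (wordM n M) (wordM n M')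
      (wordM_sorted n M) (wordM_sorted n M')
    rw [if_neg (fun h => hMM' (hwinj M M' h))] at h1
    rw [heta M, heta M']
    exact h1
  -- key for (b)
  have keyb : ∀ (M : Finset (Fin 4)) (k : Fin n),
      (∑ a, χbar k a ∘ₗ χ k a) (etaM χbar M η₀)
        = ∑ a : Fin 4, (if a ∈ M then etaM χbar M η₀ else 0) := by
    intro M k
    rw [LinearMap.sum_apply]
    refine Finset.sum_congr rfl fun a _ => ?_
    rw [LinearMap.comp_apply, heta M]
    have h1 := cbar_c_same (c := c') (i := toLex (k, a)) hcs hcn hbb'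
      (wordM_nodup n M) (hvac' (toLex (k, a)))
    have h2 : χbar k a ((χ k a) (AAop cbar' (wordM n M) η₀))
        = cbar' (toLex (k, a)) (c' (toLex (k, a)) (AAop cbar' (wordM n M) η₀)) := rfl
    rw [h2, h1]
    simp only [wordM_mem n M k a]
  have hb : ∀ (M : Finset (Fin 4)) (k : Fin n), (k : ℕ) < n - 1 →
      ((∑ a, χbar k a ∘ₗ χ k a) -
       (∑ a, χbar ⟨n - 1, by omega⟩ a ∘ₗ χ ⟨n - 1, by omega⟩ a)) (etaM χbar M η₀) = 0 := by
    intro M k _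
    rw [LinearMap.sub_apply, keyb M k, keyb M ⟨n - 1, by omega⟩, sub_self]
  have hcpart : ∀ (M : Finset (Fin 4)) (k m : Fin n), k < m →
      (∑ a, χbar k a ∘ₗ χ m a) (etaM χbar M η₀) = 0 := by
    intro M k m hkm
    rw [LinearMap.sum_apply]
    refine Finset.sum_eq_zero fun a _ => ?_
    rw [LinearMap.comp_apply, heta M]
    have hij : (toLex (k, a) : Fin n ×ₗ Fin 4) ≠ toLex (m, a) := by
      intro h
      exact absurd (congrArg (fun x : Fin n ×ₗ Fin 4 => (ofLex x).1) h) (ne_of_lt hkm)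
    have h2 : χbar k a ((χ m a) (AAop cbar' (wordM n M) η₀))
        = cbar' (toLex (k, a)) (c' (toLex (m, a)) (AAop cbar' (wordM n M) η₀)) := rfl
    rw [h2]
    exact cbar_c_ne hcs hcn hbb' hij (wordM_nodup n M)
      (by rw [wordM_mem n M k a, wordM_mem n M m a]) (hvac' _)
  refine ⟨ha1, ha2, hb, hcpart, ?_⟩
  -- dimension bound
  set F0 : Submodule ℂ V :=
      ((⨅ k : Fin n, ⨅ _ : (k : ℕ) < n - 1,
          LinearMap.ker ((∑ a, χbar k a ∘ₗ χ k a) -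
            (∑ a, χbar ⟨n - 1, by omega⟩ a ∘ₗ χ ⟨n - 1, by omega⟩ a))) ⊓
        (⨅ k : Fin n, ⨅ m : Fin n, ⨅ _ : k < m,
          LinearMap.ker (∑ a, χbar k a ∘ₗ χ m a))) with hF0def
  have hmemF : ∀ M : Finset (Fin 4), etaM χbar M η₀ ∈ F0 := by
    intro M
    rw [hF0def, Submodule.mem_inf]
    constructor
    · simp only [Submodule.mem_iInf]
      intro k hk
      exact LinearMap.mem_ker.mpr (hb M k hk)
    · simp only [Submodule.mem_iInf]
      intro k m hkm
      exact LinearMap.mem_ker.mpr (hcpart M k m hkm)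
  have horth : Orthonormal ℂ (fun M : Finset (Fin 4) => etaM χbar M η₀) :=
    ⟨ha1, fun {M M'} h => ha2 M M' h⟩
  have hli := horth.linearIndependent
  have hliF : LinearIndependent ℂ (fun M : Finset (Fin 4) =>
      (⟨etaM χbar M η₀, hmemF M⟩ : F0)) :=
    LinearIndependent.of_comp F0.subtype hli
  have hcard := hliF.cardinal_lift_le_rank
  have h16 : (Cardinal.mk (Finset (Fin 4))) = 16 := by
    simp [Cardinal.mk_fintype, Fintype.card_finset]
  rw [h16] at hcard
  simpa using hcard
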